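/- Let G be a group and g ∈ G a right Engel element (for every x ∈ G there is n with [g, x, x, …, x] = 1, n copies of x). Then g⁻¹ is a left Engel element of G. -/
import Mathlib

/-- Iterated commutator `[x, g, ..., g]` (with `n` copies of `g`), where
`[x,g] = x⁻¹g⁻¹xg`, `engel x g 0 = x`. -/
def engel {G : Type*} [Group G] (x g : G) : ℕ → G
  | 0 => x
  | n + 1 => (engel x g n)⁻¹ * g⁻¹ * engel x g n * g

lemma engel_key {G : Type*} [Group G] (g x : G) :
    ∀ n, 1 ≤ n →
      engel x g⁻¹ (n + 1) =
        (x * g⁻¹)⁻¹ * engel g (x * g⁻¹ * x⁻¹) n * (x * g⁻¹) := by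
  intro n hn
  induction n with
  | zero => omega
  | succ m ih =>
    rcases Nat.eq_or_lt_of_le hn with h1 | h1
    · -- m + 1 = 1, i.e. m = 0
      have hm : m = 0 := by omega
      subst hm
      simp only [engel]
      group
    · have hm : 1 ≤ m := by omega
      have := ih hm
      show engel x g⁻¹ (m + 1 + 1) = _
      rw [show engel x g⁻¹ (m + 1 + 1) =
            (engel x g⁻¹ (m + 1))⁻¹ * (g⁻¹)⁻¹ * engel x g⁻¹ (m + 1) * g⁻¹ from rfl,
          this,
          show engel g (x * g⁻¹ * x⁻¹) (m + 1) =
            (engel g (x * g⁻¹ * x⁻¹) m)⁻¹ * (x * g⁻¹ * x⁻¹)⁻¹ *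
              engel g (x * g⁻¹ * x⁻¹) m * (x * g⁻¹ * x⁻¹) from rfl]
      group

theorem stmt_14 {G : Type*} [Group G] (g : G)
    (hre : ∀ x : G, ∃ n, 1 ≤ n ∧ engel g x n = 1) :
    ∀ x : G, ∃ n, 1 ≤ n ∧ engel x g⁻¹ n = 1 := by
  intro x
  obtain ⟨n, hn, h1⟩ := hre (x * g⁻¹ * x⁻¹)
  refine ⟨n + 1, by omega, ?_⟩
  rw [engel_key g x n hn, h1]
  group
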